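/- Let Σ and Σ₀ be symmetric positive definite n×n matrices and T > 0. Define G(t) = (Σ + Σ₀t)⁻¹Σ₀ for t ∈ [0,T]. Then the matrix-valued function M(t) = Σ₀⁻¹ + Σ⁻¹t − [ (Σ₀⁻¹ + Σ⁻¹T)⁻¹ + 2∫_t^T Σ₀(Σ + Σ₀s)⁻¹Σ(Σ + Σ₀s)⁻¹Σ₀ ds ]⁻¹ satisfies M(T) = 0 and the Riccati ODE −M'(t) − 2M(t)ᵀG(t)ᵀΣG(t)M(t) + 4G(t)M(t) − Σ⁻¹ = 0 on [0,T]. -/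

import Mathlib

open Matrix intervalIntegral

attribute [local instance] Matrix.normedAddCommGroup Matrix.normedSpace

/-- `G(t) = (Σ + Σ₀t)⁻¹ Σ₀`. -/
noncomputable def stmt14G (n : ℕ) (Sig Sig₀ : Matrix (Fin n) (Fin n) ℝ) (t : ℝ) :
    Matrix (Fin n) (Fin n) ℝ :=
  (Sig + t • Sig₀)⁻¹ * Sig₀

/-- The explicit solution of the multidimensional Riccati equation. -/
noncomputable def stmt14M (n : ℕ) (Sig Sig₀ : Matrix (Fin n) (Fin n) ℝ) (T t : ℝ) :
    Matrix (Fin n) (Fin n) ℝ :=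
  Sig₀⁻¹ + t • Sig⁻¹ -
    ((Sig₀⁻¹ + T • Sig⁻¹)⁻¹ +
      (2:ℝ) • ∫ s in t..T,
        Sig₀ * (Sig + s • Sig₀)⁻¹ * Sig * (Sig + s • Sig₀)⁻¹ * Sig₀)⁻¹

namespace Stmt14Aux

variable {n : ℕ}

theorem matMul_hasDerivAt {f g : ℝ → Matrix (Fin n) (Fin n) ℝ}
    {f' g' : Matrix (Fin n) (Fin n) ℝ} {t : ℝ}
    (hf : HasDerivAt f f' t) (hg : HasDerivAt g g' t) :
    HasDerivAt (fun s => f s * g s) (f' * g t + f t * g') t := by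
  have hfc : Filter.Tendsto f (nhdsWithin t {t}ᶜ) (nhds (f t)) :=
    hf.continuousAt.continuousWithinAt
  have hfs : Filter.Tendsto (slope f t) (nhdsWithin t {t}ᶜ) (nhds f') := hasDerivAt_iff_tendsto_slope.mp hf
  have hgs : Filter.Tendsto (slope g t) (nhdsWithin t {t}ᶜ) (nhds g') := hasDerivAt_iff_tendsto_slope.mp hg
  apply hasDerivAt_iff_tendsto_slope.mpr
  have key : Filter.Tendsto (fun s => slope f t s * g t + f s * slope g t s)
      (nhdsWithin t {t}ᶜ) (nhds (f' * g t + f t * g')) :=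
    Filter.Tendsto.add (hfs.mul tendsto_const_nhds) (hfc.mul hgs)
  refine key.congr' ?_
  filter_upwards [self_mem_nhdsWithin] with s hs
  have : slope f t s * g t + f s * slope g t s = slope (fun s => f s * g s) t s := by
    simp only [slope_def_module]
    rw [smul_mul_assoc, mul_smul_comm, ← smul_add]
    congr 1
    noncomm_ring
  exact this

theorem matMul_const_hasDerivAt {f : ℝ → Matrix (Fin n) (Fin n) ℝ}
    {f' : Matrix (Fin n) (Fin n) ℝ} {t : ℝ} (hf : HasDerivAt f f' t)
    (C : Matrix (Fin n) (Fin n) ℝ) :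
    HasDerivAt (fun s => f s * C) (f' * C) t := by
  simpa using matMul_hasDerivAt hf (hasDerivAt_const t C)

theorem const_matMul_hasDerivAt {f : ℝ → Matrix (Fin n) (Fin n) ℝ}
    {f' : Matrix (Fin n) (Fin n) ℝ} {t : ℝ} (hf : HasDerivAt f f' t)
    (C : Matrix (Fin n) (Fin n) ℝ) :
    HasDerivAt (fun s => C * f s) (C * f') t := by
  simpa using matMul_hasDerivAt (hasDerivAt_const t C) hf

theorem matInv_hasDerivAt {A : ℝ → Matrix (Fin n) (Fin n) ℝ}
    {A' : Matrix (Fin n) (Fin n) ℝ} {t : ℝ}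
    (hA : HasDerivAt A A' t) (h : ∀ᶠ s in nhds t, IsUnit (A s).det) :
    HasDerivAt (fun s => (A s)⁻¹) (-((A t)⁻¹ * A' * (A t)⁻¹)) t := by
  have ht : IsUnit (A t).det := h.self_of_nhds
  have hinv : ContinuousAt (fun s => (A s)⁻¹) t := by
    refine (continuousAt_matrix_inv (A t) ?_).comp hA.continuousAt
    have : ContinuousAt (fun x : ℝ => Ring.inverse x) (A t).det := by
      rw [Ring.inverse_eq_inv']
      exact continuousAt_inv₀ (by simpa [isUnit_iff_ne_zero] using ht)
    exact this
  have hAs : Filter.Tendsto (slope A t) (nhdsWithin t {t}ᶜ) (nhds A') := hasDerivAt_iff_tendsto_slope.mp hA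
  apply hasDerivAt_iff_tendsto_slope.mpr
  have hinvW : Filter.Tendsto (fun s => (A s)⁻¹) (nhdsWithin t {t}ᶜ) (nhds ((A t)⁻¹)) :=
    hinv.continuousWithinAt
  have key : Filter.Tendsto (fun s => -((A s)⁻¹ * slope A t s * (A t)⁻¹))
      (nhdsWithin t {t}ᶜ) (nhds (-((A t)⁻¹ * A' * (A t)⁻¹))) :=
    Filter.Tendsto.neg (Filter.Tendsto.mul (Filter.Tendsto.mul hinvW hAs) tendsto_const_nhds)
  refine key.congr' ?_
  filter_upwards [self_mem_nhdsWithin, (h.filter_mono nhdsWithin_le_nhds)] with s hs hus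
  have hsub : (A s)⁻¹ - (A t)⁻¹ = (A s)⁻¹ * (A t - A s) * (A t)⁻¹ := by
    rw [Matrix.mul_sub, Matrix.sub_mul, Matrix.mul_assoc,
      Matrix.mul_nonsing_inv _ ht, Matrix.mul_one, Matrix.nonsing_inv_mul _ hus, Matrix.one_mul]
  have : slope (fun s => (A s)⁻¹) t s = -((A s)⁻¹ * slope A t s * (A t)⁻¹) := by
    simp only [slope_def_module, hsub]
    rw [mul_smul_comm, smul_mul_assoc, ← smul_neg]
    congr 1
    noncomm_ring
  exact this.symm

theorem mul_inv_comm' {A B : Matrix (Fin n) (Fin n) ℝ} (h : A * B = B * A)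
    (hB : IsUnit B.det) : A * B⁻¹ = B⁻¹ * A := by
  calc A * B⁻¹ = B⁻¹ * B * (A * B⁻¹) := by rw [Matrix.nonsing_inv_mul _ hB, Matrix.one_mul]
    _ = B⁻¹ * (B * A * B⁻¹) := by rw [Matrix.mul_assoc, Matrix.mul_assoc]
    _ = B⁻¹ * (A * B * B⁻¹) := by rw [h]
    _ = B⁻¹ * (A * (B * B⁻¹)) := by rw [Matrix.mul_assoc]
    _ = B⁻¹ * A := by rw [Matrix.mul_nonsing_inv _ hB, Matrix.mul_one]

end Stmt14Aux

/-- `M` satisfies `M(T) = 0` and the Riccati ODE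
`−M' − 2MᵀGᵀΣGM + 4GM − Σ⁻¹ = 0` on `[0,T]`. -/
theorem stmt14 (n : ℕ) (Sig Sig₀ : Matrix (Fin n) (Fin n) ℝ)
    (hSig : Sig.PosDef) (hSig₀ : Sig₀.PosDef) (T : ℝ) (hT : 0 < T) :
    stmt14M n Sig Sig₀ T T = 0 ∧
    ∀ t ∈ Set.Icc (0:ℝ) T,
      HasDerivAt (stmt14M n Sig Sig₀ T)
        (-((2:ℝ) • ((stmt14M n Sig Sig₀ T t)ᵀ * (stmt14G n Sig Sig₀ t)ᵀ * Sig *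
              stmt14G n Sig Sig₀ t * stmt14M n Sig Sig₀ T t))
          + (4:ℝ) • (stmt14G n Sig Sig₀ t * stmt14M n Sig Sig₀ T t) - Sig⁻¹) t := by
  have hS : IsUnit Sig.det := hSig.det_pos.ne'.isUnit
  have hS0 : IsUnit Sig₀.det := hSig₀.det_pos.ne'.isUnit
  set p : Matrix (Fin n) (Fin n) ℝ := Sig₀⁻¹ * Sig with hpdef
  have hp : IsUnit p.det := by
    rw [hpdef, Matrix.det_mul]
    exact (Matrix.isUnit_nonsing_inv_det _ hS0).mul hS
  have hSp : Sig₀ * p = Sig := by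
    rw [hpdef, ← Matrix.mul_assoc, Matrix.mul_nonsing_inv _ hS0, Matrix.one_mul]
  have hSinv : p⁻¹ * Sig₀⁻¹ = Sig⁻¹ := by rw [← Matrix.mul_inv_rev, hSp]
  set e : ℝ → Matrix (Fin n) (Fin n) ℝ := fun s => p + s • 1 with hedef
  have hCpos : ∀ s : ℝ, 0 ≤ s → (Sig + s • Sig₀).PosDef := by
    intro s hs
    refine hSig.add_posSemidef ⟨?_, fun x => ?_⟩
    · rw [Matrix.IsHermitian, Matrix.conjTranspose_smul, hSig₀.isHermitian.eq]; norm_num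
    · exact (hSig₀.posSemidef.smul hs).2 x
  have hCdet : ∀ s : ℝ, 0 ≤ s → IsUnit (Sig + s • Sig₀).det :=
    fun s hs => (hCpos s hs).det_pos.ne'.isUnit
  have heC : ∀ s : ℝ, e s = Sig₀⁻¹ * (Sig + s • Sig₀) := by
    intro s
    rw [hedef, Matrix.mul_add, Matrix.mul_smul, Matrix.nonsing_inv_mul _ hS0, hpdef]
  have hedet : ∀ s : ℝ, IsUnit (Sig + s • Sig₀).det → IsUnit (e s).det := by
    intro s hs
    rw [heC, Matrix.det_mul]
    exact (Matrix.isUnit_nonsing_inv_det _ hS0).mul hs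
  have hginv : ∀ s : ℝ, IsUnit (Sig + s • Sig₀).det → (Sig + s • Sig₀)⁻¹ * Sig₀ = (e s)⁻¹ := by
    intro s hs
    rw [heC, Matrix.mul_inv_rev, Matrix.nonsing_inv_nonsing_inv _ hS0]
  -- commutation lemmas
  have mic : ∀ (A B : Matrix (Fin n) (Fin n) ℝ), A * B = B * A → IsUnit B.det →
      A * B⁻¹ = B⁻¹ * A := by
    intro A B h hB
    calc A * B⁻¹ = B⁻¹ * B * (A * B⁻¹) := by rw [Matrix.nonsing_inv_mul _ hB, Matrix.one_mul]
      _ = B⁻¹ * (B * A * B⁻¹) := by rw [Matrix.mul_assoc, Matrix.mul_assoc]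
      _ = B⁻¹ * (A * B * B⁻¹) := by rw [h]
      _ = B⁻¹ * (A * (B * B⁻¹)) := by rw [Matrix.mul_assoc]
      _ = B⁻¹ * A := by rw [Matrix.mul_nonsing_inv _ hB, Matrix.mul_one]
  have hcomm_ee : ∀ a b : ℝ, e a * e b = e b * e a := by
    intro a b
    simp only [hedef, Matrix.mul_add, Matrix.add_mul, Matrix.mul_smul, Matrix.smul_mul,
      Matrix.mul_one, Matrix.one_mul]
    module
  have hcomm_pe : ∀ a : ℝ, p * e a = e a * p := by
    intro a
    simp only [hedef, Matrix.mul_add, Matrix.add_mul, Matrix.mul_smul, Matrix.smul_mul,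
      Matrix.mul_one, Matrix.one_mul]
  have hcomm_pg : ∀ a : ℝ, IsUnit (e a).det → p * (e a)⁻¹ = (e a)⁻¹ * p :=
    fun a ha => mic _ _ (hcomm_pe a) ha
  have hcomm_eg : ∀ a b : ℝ, IsUnit (e a).det → e b * (e a)⁻¹ = (e a)⁻¹ * e b :=
    fun a b ha => mic _ _ (hcomm_ee b a) ha
  have hcomm_gg : ∀ a b : ℝ, IsUnit (e a).det → IsUnit (e b).det →
      (e a)⁻¹ * (e b)⁻¹ = (e b)⁻¹ * (e a)⁻¹ :=
    fun a b ha hb => mic _ _ (hcomm_eg a b ha).symm hb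
  have hcomm_ipe : ∀ a : ℝ, e a * p⁻¹ = p⁻¹ * e a :=
    fun a => mic _ _ (hcomm_pe a).symm hp
  have hcomm_ipg : ∀ a : ℝ, IsUnit (e a).det → p⁻¹ * (e a)⁻¹ = (e a)⁻¹ * p⁻¹ :=
    fun a ha => mic _ _ (hcomm_ipe a).symm ha
  -- derivatives of e and g
  have hederiv : ∀ t₀ : ℝ, HasDerivAt e 1 t₀ := by
    intro t₀
    have h1 := (hasDerivAt_id t₀).smul_const (1 : Matrix (Fin n) (Fin n) ℝ)
    have h2 := (hasDerivAt_const t₀ p).add h1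
    exact h2.congr_deriv (by simp)
  have hedetcont : Continuous fun s : ℝ => (e s).det := by
    have : Continuous e := by
      rw [hedef]; exact continuous_const.add (continuous_id.smul continuous_const)
    exact this.matrix_det
  have hgderiv : ∀ s : ℝ, IsUnit (e s).det →
      HasDerivAt (fun r => (e r)⁻¹) (-((e s)⁻¹ * (e s)⁻¹)) s := by
    intro s hs
    have hev : ∀ᶠ r in nhds s, IsUnit (e r).det := by
      have h1 : (e s).det ≠ 0 := by simpa [isUnit_iff_ne_zero] using hs
      filter_upwards [hedetcont.continuousAt.eventually_ne h1] with r hr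
      exact isUnit_iff_ne_zero.mpr hr
    have := Stmt14Aux.matInv_hasDerivAt (hederiv s) hev
    simpa using this
  -- the integrand in closed form
  have hF : ∀ s : ℝ, IsUnit (Sig + s • Sig₀).det →
      Sig₀ * (Sig + s • Sig₀)⁻¹ * Sig * (Sig + s • Sig₀)⁻¹ * Sig₀
        = Sig₀ * p * ((e s)⁻¹ * (e s)⁻¹) := by
    intro s hs
    have h1 : (Sig + s • Sig₀)⁻¹ = (e s)⁻¹ * Sig₀⁻¹ := by
      rw [← hginv s hs, Matrix.mul_assoc, Matrix.mul_nonsing_inv _ hS0, Matrix.mul_one]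
    rw [h1]
    simp only [Matrix.mul_assoc]
    rw [Matrix.nonsing_inv_mul _ hS0, Matrix.mul_one, ← Matrix.mul_assoc Sig₀⁻¹ Sig,
      ← hpdef]
    rw [← Matrix.mul_assoc (e s)⁻¹ p, ← hcomm_pg s (hedet s hs), Matrix.mul_assoc p,
      ← Matrix.mul_assoc Sig₀ p]
  -- FTC evaluation of the integral
  have hInt : ∀ t₁ : ℝ, (∀ r ∈ Set.uIcc t₁ T, IsUnit (Sig + r • Sig₀).det) →
      (∫ s in t₁..T, Sig₀ * (Sig + s • Sig₀)⁻¹ * Sig * (Sig + s • Sig₀)⁻¹ * Sig₀)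
        = Sig₀ * p * ((e t₁)⁻¹ - (e T)⁻¹) := by
    intro t₁ hu
    have hderiv : ∀ r ∈ Set.uIcc t₁ T,
        HasDerivAt (fun s => -(Sig₀ * p) * (e s)⁻¹)
          (Sig₀ * (Sig + r • Sig₀)⁻¹ * Sig * (Sig + r • Sig₀)⁻¹ * Sig₀) r := by
      intro r hr
      have h1 := Stmt14Aux.const_matMul_hasDerivAt (hgderiv r (hedet r (hu r hr))) (-(Sig₀ * p))
      rw [hF r (hu r hr)]
      convert h1 using 1
      rw [Matrix.neg_mul, Matrix.mul_neg, neg_neg]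
    have hcont : ContinuousOn
        (fun s => Sig₀ * (Sig + s • Sig₀)⁻¹ * Sig * (Sig + s • Sig₀)⁻¹ * Sig₀)
        (Set.uIcc t₁ T) := by
      intro r hr
      apply ContinuousAt.continuousWithinAt
      have hC : ContinuousAt (fun s : ℝ => (Sig + s • Sig₀)⁻¹) r := by
        refine (continuousAt_matrix_inv _ ?_).comp
          ((continuous_const.add (continuous_id.smul continuous_const)).continuousAt)
        rw [Ring.inverse_eq_inv']
        exact continuousAt_inv₀ (by simpa [isUnit_iff_ne_zero] using hu r hr)
      exact (((continuousAt_const.mul hC).mul continuousAt_const).mul hC).mul continuousAt_const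
    rw [intervalIntegral.integral_eq_sub_of_hasDerivAt hderiv
      (hcont.intervalIntegrable)]
    rw [Matrix.mul_sub, Matrix.neg_mul, Matrix.neg_mul, Matrix.mul_assoc, Matrix.mul_assoc]
    abel
  -- \hat M in closed form
  have hMhat : ∀ a : ℝ, Sig₀⁻¹ + a • Sig⁻¹ = e a * p⁻¹ * Sig₀⁻¹ := by
    intro a
    rw [hedef]
    simp only
    rw [Matrix.add_mul, Matrix.add_mul, Matrix.mul_nonsing_inv _ hp, Matrix.one_mul,
      Matrix.smul_mul, Matrix.smul_mul, Matrix.one_mul, hSinv]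
  have he2T : ∀ s : ℝ, e (2*T - s) = (2:ℝ) • (e T) - e s := by
    intro s; simp only [hedef]; module
  -- closed form for M
  have hM_closed : ∀ s : ℝ, (∀ r ∈ Set.uIcc s T, IsUnit (Sig + r • Sig₀).det) →
      0 ≤ 2*T - s →
      stmt14M n Sig Sig₀ T s
        = (T - s) • (e s * ((e (2*T - s))⁻¹ * (p⁻¹ * Sig₀⁻¹))) := by
    intro s hu h2T
    have hus : IsUnit (e s).det := hedet s (hu s Set.left_mem_uIcc)
    have huT : IsUnit (e T).det := hedet T (hu T Set.right_mem_uIcc)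
    have hud : IsUnit (e (2*T - s)).det := hedet _ (hCdet _ h2T)
    rw [stmt14M, hInt s hu, hMhat s, hMhat T]
    have hK1 : (e T * p⁻¹ * Sig₀⁻¹)⁻¹ = Sig₀ * (p * (e T)⁻¹) := by
      rw [Matrix.mul_inv_rev, Matrix.mul_inv_rev, Matrix.nonsing_inv_nonsing_inv _ hS0,
        Matrix.nonsing_inv_nonsing_inv _ hp, Matrix.mul_assoc]
    have h2g : e (2*T - s) * ((e s)⁻¹ * (e T)⁻¹) = (2:ℝ) • (e s)⁻¹ - (e T)⁻¹ := by
      rw [he2T s, Matrix.sub_mul, Matrix.smul_mul]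
      have hA : e T * ((e s)⁻¹ * (e T)⁻¹) = (e s)⁻¹ := by
        rw [hcomm_gg s T hus huT, ← Matrix.mul_assoc, Matrix.mul_nonsing_inv _ huT,
          Matrix.one_mul]
      have hB : e s * ((e s)⁻¹ * (e T)⁻¹) = (e T)⁻¹ := by
        rw [← Matrix.mul_assoc, Matrix.mul_nonsing_inv _ hus, Matrix.one_mul]
      rw [hA, hB]
    have hK2 : Sig₀ * (p * (e T)⁻¹)
          + (2:ℝ) • (Sig₀ * p * ((e s)⁻¹ - (e T)⁻¹))
        = Sig₀ * p * (e (2*T - s) * ((e s)⁻¹ * (e T)⁻¹)) := by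
      rw [h2g, ← Matrix.mul_assoc Sig₀ p]
      simp only [Matrix.mul_sub, Matrix.mul_smul, smul_sub]
      module
    rw [hK1, hK2]
    have hK3 : (Sig₀ * p * (e (2*T - s) * ((e s)⁻¹ * (e T)⁻¹)))⁻¹
        = e T * (e s * ((e (2*T - s))⁻¹ * (p⁻¹ * Sig₀⁻¹))) := by
      simp only [Matrix.mul_inv_rev]
      rw [Matrix.nonsing_inv_nonsing_inv _ hus, Matrix.nonsing_inv_nonsing_inv _ huT]
      simp only [Matrix.mul_assoc]
    rw [hK3]
    -- final factoring
    have hins : e s * (p⁻¹ * Sig₀⁻¹)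
        = e s * (e (2*T - s) * ((e (2*T - s))⁻¹ * (p⁻¹ * Sig₀⁻¹))) := by
      rw [← Matrix.mul_assoc (e (2*T - s)), Matrix.mul_nonsing_inv _ hud, Matrix.one_mul]
    rw [Matrix.mul_assoc (e s), hins]
    have hswap : e T * (e s * ((e (2*T - s))⁻¹ * (p⁻¹ * Sig₀⁻¹)))
        = e s * (e T * ((e (2*T - s))⁻¹ * (p⁻¹ * Sig₀⁻¹))) := by
      rw [← Matrix.mul_assoc, ← Matrix.mul_assoc, hcomm_ee T s]
      simp only [Matrix.mul_assoc]
    rw [hswap]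
    rw [← Matrix.mul_sub]
    rw [← Matrix.sub_mul]
    have hdT : e (2*T - s) - e T = (T - s) • (1 : Matrix (Fin n) (Fin n) ℝ) := by
      simp only [hedef]; module
    rw [hdT, Matrix.smul_mul, Matrix.one_mul, Matrix.mul_smul]
  -- Part 1 : M T = 0
  have hMT0 : stmt14M n Sig Sig₀ T T = 0 := by
    rw [hM_closed T ?h1 (by linarith)]
    · simp
    · intro r hr
      rw [Set.uIcc_self, Set.mem_singleton_iff] at hr
      subst hr
      exact hCdet _ hT.le
  -- Part 2 setup : fix t₀
  have hpart2 : ∀ t₀ ∈ Set.Icc (0:ℝ) T,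
      HasDerivAt (stmt14M n Sig Sig₀ T)
        (-((2:ℝ) • ((stmt14M n Sig Sig₀ T t₀)ᵀ * (stmt14G n Sig Sig₀ t₀)ᵀ * Sig *
              stmt14G n Sig Sig₀ t₀ * stmt14M n Sig Sig₀ T t₀))
          + (4:ℝ) • (stmt14G n Sig Sig₀ t₀ * stmt14M n Sig Sig₀ T t₀) - Sig⁻¹) t₀ := by
    intro t₀ ht₀
    have hdetC : Continuous fun s : ℝ => (Sig + s • Sig₀).det :=
      (continuous_const.add (continuous_id.smul continuous_const)).matrix_det
    have hev : ∀ᶠ s in nhds t₀, IsUnit (Sig + s • Sig₀).det := by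
      have h1 : (Sig + t₀ • Sig₀).det ≠ 0 := by
        simpa [isUnit_iff_ne_zero] using hCdet t₀ ht₀.1
      filter_upwards [hdetC.continuousAt.eventually_ne h1] with r hr
      exact isUnit_iff_ne_zero.mpr hr
    obtain ⟨δ, hδpos, hball⟩ := Metric.eventually_nhds_iff.mp hev
    set δ' : ℝ := min δ T with hδ'def
    have hδ'pos : 0 < δ' := lt_min hδpos hT
    have hnear : ∀ s : ℝ, dist s t₀ < δ' →
        (∀ r ∈ Set.uIcc s T, IsUnit (Sig + r • Sig₀).det) ∧ 0 ≤ 2*T - s := by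
      intro s hs
      have hds : |s - t₀| < δ' := by rwa [Real.dist_eq] at hs
      obtain ⟨hd1, hd2⟩ := abs_lt.mp hds
      have hδ'T : δ' ≤ T := min_le_right _ _
      have hδ'δ : δ' ≤ δ := min_le_left _ _
      refine ⟨?_, by have := ht₀.2; linarith⟩
      intro r hr
      rcases le_or_gt 0 r with h|h
      · exact hCdet r h
      · have hrs : s ≤ r := by
          rcases Set.mem_uIcc.mp hr with ⟨h3, h4⟩ | ⟨h3, h4⟩
          · exact h3
          · linarith
        apply hball
        rw [Real.dist_eq, abs_lt]
        have := ht₀.1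
        constructor <;> linarith
    have heqlocal : ∀ s : ℝ, dist s t₀ < δ' → stmt14M n Sig Sig₀ T s
        = (T - s) • (e s * ((e (2*T - s))⁻¹ * (p⁻¹ * Sig₀⁻¹))) :=
      fun s hs => hM_closed s (hnear s hs).1 (hnear s hs).2
    have hut : IsUnit (e t₀).det := hedet _ (hCdet t₀ ht₀.1)
    have hud : IsUnit (e (2*T - t₀)).det := hedet _ (hCdet _ (by linarith [ht₀.2]))
    have hqev : ∀ᶠ s in nhds t₀, IsUnit (e (2*T - s)).det := by
      have hc2 : Continuous fun s : ℝ => (e (2*T - s)).det :=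
        hedetcont.comp (continuous_const.sub continuous_id)
      have h1 : (e (2*T - t₀)).det ≠ 0 := by simpa [isUnit_iff_ne_zero] using hud
      filter_upwards [hc2.continuousAt.eventually_ne h1] with r hr
      exact isUnit_iff_ne_zero.mpr hr
    have hqderiv : HasDerivAt (fun s => (e (2*T - s))⁻¹)
        ((e (2*T - t₀))⁻¹ * (e (2*T - t₀))⁻¹) t₀ := by
      have hA : HasDerivAt (fun s => e (2*T - s)) (-1) t₀ := by
        have h1 : HasDerivAt (fun s : ℝ => 2*T - s) (-1:ℝ) t₀ := by
          simpa using (hasDerivAt_id t₀).const_sub (2*T)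
        have h2 := h1.smul_const (1 : Matrix (Fin n) (Fin n) ℝ)
        have h3 := (hasDerivAt_const t₀ p).add h2
        exact h3.congr_deriv (by simp)
      have := Stmt14Aux.matInv_hasDerivAt hA hqev
      simpa using this
    have hqY : HasDerivAt (fun s => (e (2*T - s))⁻¹ * (p⁻¹ * Sig₀⁻¹))
        ((e (2*T - t₀))⁻¹ * (e (2*T - t₀))⁻¹ * (p⁻¹ * Sig₀⁻¹)) t₀ :=
      Stmt14Aux.matMul_const_hasDerivAt hqderiv _
    have hBd : HasDerivAt (fun s => e s * ((e (2*T - s))⁻¹ * (p⁻¹ * Sig₀⁻¹)))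
        (1 * ((e (2*T - t₀))⁻¹ * (p⁻¹ * Sig₀⁻¹))
          + e t₀ * ((e (2*T - t₀))⁻¹ * (e (2*T - t₀))⁻¹ * (p⁻¹ * Sig₀⁻¹))) t₀ :=
      Stmt14Aux.matMul_hasDerivAt (hederiv t₀) hqY
    have hc : HasDerivAt (fun s : ℝ => T - s) (-1:ℝ) t₀ := by
      exact ((hasDerivAt_const t₀ T).sub (hasDerivAt_id t₀)).congr_deriv (by simp)
    have hMcD : HasDerivAt
        (fun s => (T - s) • (e s * ((e (2*T - s))⁻¹ * (p⁻¹ * Sig₀⁻¹))))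
        ((T - t₀) • (1 * ((e (2*T - t₀))⁻¹ * (p⁻¹ * Sig₀⁻¹))
            + e t₀ * ((e (2*T - t₀))⁻¹ * (e (2*T - t₀))⁻¹ * (p⁻¹ * Sig₀⁻¹)))
          + (-1:ℝ) • (e t₀ * ((e (2*T - t₀))⁻¹ * (p⁻¹ * Sig₀⁻¹)))) t₀ := by
      exact hc.smul hBd
    have hMD : HasDerivAt (stmt14M n Sig Sig₀ T)
        ((T - t₀) • (1 * ((e (2*T - t₀))⁻¹ * (p⁻¹ * Sig₀⁻¹))
            + e t₀ * ((e (2*T - t₀))⁻¹ * (e (2*T - t₀))⁻¹ * (p⁻¹ * Sig₀⁻¹)))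
          + (-1:ℝ) • (e t₀ * ((e (2*T - t₀))⁻¹ * (p⁻¹ * Sig₀⁻¹)))) t₀ := by
      refine hMcD.congr_of_eventuallyEq ?_
      filter_upwards [Metric.ball_mem_nhds t₀ hδ'pos] with s hs
      exact heqlocal s (Metric.mem_ball.mp hs)
    -- transpose lemmas
    have hS0t : Sig₀ᵀ = Sig₀ := by
      rw [← Matrix.conjTranspose_eq_transpose_of_trivial, hSig₀.isHermitian.eq]
    have hSt : Sigᵀ = Sig := by
      rw [← Matrix.conjTranspose_eq_transpose_of_trivial, hSig.isHermitian.eq]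
    have c2 : ∀ Z : Matrix (Fin n) (Fin n) ℝ, Sig₀⁻¹ * (Sig₀ * Z) = Z := fun Z => by
      rw [← Matrix.mul_assoc, Matrix.nonsing_inv_mul _ hS0, Matrix.one_mul]
    have c2' : ∀ Z : Matrix (Fin n) (Fin n) ℝ, Sig₀ * (Sig₀⁻¹ * Z) = Z := fun Z => by
      rw [← Matrix.mul_assoc, Matrix.mul_nonsing_inv _ hS0, Matrix.one_mul]
    have cA : ∀ (a : ℝ), IsUnit (e a).det → ∀ Z : Matrix (Fin n) (Fin n) ℝ,
        (e a)⁻¹ * (e a * Z) = Z := fun a h Z => by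
      rw [← Matrix.mul_assoc, Matrix.nonsing_inv_mul _ h, Matrix.one_mul]
    have hpt : pᵀ = Sig₀ * (p * Sig₀⁻¹) := by
      rw [hpdef, Matrix.transpose_mul, hSt, Matrix.transpose_nonsing_inv, hS0t,
        Matrix.mul_assoc Sig₀⁻¹ Sig Sig₀⁻¹, c2']
    have het : ∀ a : ℝ, (e a)ᵀ = Sig₀ * (e a * Sig₀⁻¹) := by
      intro a
      simp only [hedef]
      rw [Matrix.transpose_add, hpt, Matrix.transpose_smul, Matrix.transpose_one,
        Matrix.add_mul, Matrix.smul_mul, Matrix.one_mul, Matrix.mul_add, Matrix.mul_smul,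
        Matrix.mul_nonsing_inv _ hS0]
    have hgtt : ∀ a : ℝ, IsUnit (e a).det → ((e a)⁻¹)ᵀ = Sig₀ * ((e a)⁻¹ * Sig₀⁻¹) := by
      intro a ha
      rw [Matrix.transpose_nonsing_inv, het a, Matrix.mul_inv_rev, Matrix.mul_inv_rev,
        Matrix.nonsing_inv_nonsing_inv _ hS0, Matrix.mul_assoc]
    -- swap lemmas
    have sw_qe : ∀ Z : Matrix (Fin n) (Fin n) ℝ,
        (e (2*T - t₀))⁻¹ * (e t₀ * Z) = e t₀ * ((e (2*T - t₀))⁻¹ * Z) := fun Z => by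
      rw [← Matrix.mul_assoc, ← hcomm_eg (2*T - t₀) t₀ hud, Matrix.mul_assoc]
    have sw_pe : ∀ Z : Matrix (Fin n) (Fin n) ℝ,
        p⁻¹ * (e t₀ * Z) = e t₀ * (p⁻¹ * Z) := fun Z => by
      rw [← Matrix.mul_assoc, ← hcomm_ipe t₀, Matrix.mul_assoc]
    have sw_pq : ∀ Z : Matrix (Fin n) (Fin n) ℝ,
        p⁻¹ * ((e (2*T - t₀))⁻¹ * Z) = (e (2*T - t₀))⁻¹ * (p⁻¹ * Z) := fun Z => by
      rw [← Matrix.mul_assoc, hcomm_ipg _ hud, Matrix.mul_assoc]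
    have hSS0 : ∀ Z : Matrix (Fin n) (Fin n) ℝ, Sig⁻¹ * (Sig₀ * Z) = p⁻¹ * Z := fun Z => by
      rw [← hSinv, Matrix.mul_assoc, c2]
    -- main rewriting
    have hGt : stmt14G n Sig Sig₀ t₀ = (e t₀)⁻¹ := by
      rw [stmt14G]; exact hginv t₀ (hCdet t₀ ht₀.1)
    have hMt0 : stmt14M n Sig Sig₀ T t₀
        = (T - t₀) • (e t₀ * ((e (2*T - t₀))⁻¹ * Sig⁻¹)) := by
      rw [heqlocal t₀ (by simpa using hδ'pos), hSinv]
    convert hMD using 1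
    rw [hSinv, hGt, hMt0, Matrix.transpose_smul]
    have hXsym : (e t₀ * ((e (2*T - t₀))⁻¹ * Sig⁻¹))ᵀ
        = e t₀ * ((e (2*T - t₀))⁻¹ * Sig⁻¹) := by
      rw [Matrix.transpose_mul, Matrix.transpose_mul, Matrix.transpose_nonsing_inv, hSt,
        hgtt _ hud, het t₀]
      simp only [Matrix.mul_assoc]
      rw [c2, sw_qe, hSS0, sw_pe, sw_pq, hSinv]
    rw [hXsym, hgtt t₀ hut]
    simp only [Matrix.smul_mul, Matrix.mul_smul, smul_smul]
    -- core identities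
    have hGTS : (Sig₀ * ((e t₀)⁻¹ * Sig₀⁻¹)) * Sig = Sig * (e t₀)⁻¹ := by
      simp only [Matrix.mul_assoc]
      rw [← hpdef, ← hcomm_pg t₀ hut, ← Matrix.mul_assoc Sig₀ p, hSp]
    have hXS : (e t₀ * ((e (2*T - t₀))⁻¹ * Sig⁻¹)) * Sig = e t₀ * (e (2*T - t₀))⁻¹ := by
      rw [Matrix.mul_assoc, Matrix.mul_assoc, Matrix.nonsing_inv_mul _ hS, Matrix.mul_one]
    have core1 : (e t₀ * ((e (2*T - t₀))⁻¹ * Sig⁻¹)) * (Sig₀ * ((e t₀)⁻¹ * Sig₀⁻¹)) * Sig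
          * (e t₀)⁻¹ * (e t₀ * ((e (2*T - t₀))⁻¹ * Sig⁻¹))
        = (e (2*T - t₀))⁻¹ * ((e (2*T - t₀))⁻¹ * Sig⁻¹) := by
      rw [Matrix.mul_assoc (e t₀ * ((e (2*T - t₀))⁻¹ * Sig⁻¹)) (Sig₀ * ((e t₀)⁻¹ * Sig₀⁻¹)) Sig,
        hGTS, ← Matrix.mul_assoc _ Sig (e t₀)⁻¹, hXS,
        Matrix.mul_assoc (e t₀) (e (2*T - t₀))⁻¹ (e t₀)⁻¹,
        hcomm_gg (2*T - t₀) t₀ hud hut,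
        ← Matrix.mul_assoc (e t₀) (e t₀)⁻¹ (e (2*T - t₀))⁻¹,
        Matrix.mul_nonsing_inv _ hut, Matrix.one_mul,
        Matrix.mul_assoc (e (2*T - t₀))⁻¹ (e t₀)⁻¹ _, cA t₀ hut]
    rw [core1, cA t₀ hut]
    -- D side reductions
    have hetq : e t₀ * (e (2*T - t₀))⁻¹ = 1 - (2*(T - t₀)) • (e (2*T - t₀))⁻¹ := by
      have hed : e t₀ = e (2*T - t₀) - (2*(T - t₀)) • (1 : Matrix (Fin n) (Fin n) ℝ) := by
        simp only [hedef]; module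
      rw [hed, Matrix.sub_mul, Matrix.mul_nonsing_inv _ hud, Matrix.smul_mul, Matrix.one_mul]
    have hD1 : e t₀ * ((e (2*T - t₀))⁻¹ * (e (2*T - t₀))⁻¹ * Sig⁻¹)
        = (e (2*T - t₀))⁻¹ * Sig⁻¹
          - (2*(T - t₀)) • ((e (2*T - t₀))⁻¹ * ((e (2*T - t₀))⁻¹ * Sig⁻¹)) := by
      rw [Matrix.mul_assoc (e (2*T - t₀))⁻¹ (e (2*T - t₀))⁻¹ Sig⁻¹,
        ← Matrix.mul_assoc (e t₀) (e (2*T - t₀))⁻¹ _, hetq,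
        Matrix.sub_mul, Matrix.one_mul, Matrix.smul_mul]
    have hD2 : e t₀ * ((e (2*T - t₀))⁻¹ * Sig⁻¹)
        = Sig⁻¹ - (2*(T - t₀)) • ((e (2*T - t₀))⁻¹ * Sig⁻¹) := by
      rw [← Matrix.mul_assoc, hetq, Matrix.sub_mul, Matrix.one_mul, Matrix.smul_mul]
    rw [hD1, hD2, Matrix.one_mul]
    module
  exact ⟨hMT0, hpart2⟩
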